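/- The 4×4 real symmetric matrix Γ = (1/2)·[[√2, 0, −1, −1], [0, √2, −1, 1], [−1, −1, √2, 0], [−1, 1, 0, √2]] is positive semidefinite and has trace 2√2. -/

import Mathlib

/-- The 4×4 Gram matrix from the first-level SDP certificate for the CHSH inequality
is positive semidefinite and has trace `2√2`. -/
theorem chsh_gamma_psd_and_trace :
    ((1 / 2 : ℝ) • !![Real.sqrt 2, 0, -1, -1;
                      0, Real.sqrt 2, -1, 1;
                      -1, -1, Real.sqrt 2, 0;
                      -1, 1, 0, Real.sqrt 2] : Matrix (Fin 4) (Fin 4) ℝ).PosSemidef ∧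
    ((1 / 2 : ℝ) • !![Real.sqrt 2, 0, -1, -1;
                      0, Real.sqrt 2, -1, 1;
                      -1, -1, Real.sqrt 2, 0;
                      -1, 1, 0, Real.sqrt 2] : Matrix (Fin 4) (Fin 4) ℝ).trace
      = 2 * Real.sqrt 2 := by
  have hs : Real.sqrt 2 ^ 2 = 2 := Real.sq_sqrt (by norm_num)
  have hpos : 0 < Real.sqrt 2 := Real.sqrt_pos.mpr (by norm_num)
  constructor
  · refine Matrix.PosSemidef.of_dotProduct_mulVec_nonneg ?_ ?_
    · ext i j
      fin_cases i <;> fin_cases j <;>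
        simp [Matrix.conjTranspose_apply, Matrix.vecHead, Matrix.vecTail]
    · intro x
      have h0 := sq_nonneg (Real.sqrt 2 * x 0 - x 2 - x 3)
      have h1 := sq_nonneg (Real.sqrt 2 * x 1 - x 2 + x 3)
      simp [Matrix.mulVec, dotProduct, Fin.sum_univ_four, Matrix.vecHead, Matrix.vecTail]
      nlinarith [sq_nonneg (x 0), sq_nonneg (x 1), sq_nonneg (x 2), sq_nonneg (x 3)]
  · simp [Matrix.trace, Fin.sum_univ_four, Matrix.diag]
    ring
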